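/- arXiv:2009.07158 — 2 statements merged into one kernel-verified Lean document; each statement's English description precedes it below -/
import Mathlib

section
/- Let 0 → M →^α N →^β L → 0 be an exact sequence of W(k)_σ-modules of finite W(k)-length, with α and β generalized W(k)_σ-homomorphisms. Then the induced sequence of semistable parts 0 → M^{ss} → N^{ss} → L^{ss} → 0 is also exact. -/
noncomputable section

/-- The `i`-th power (`i : ℤ`) of the Witt-vector Frobenius automorphism `σ` of `W(k)`. -/
def sigmaZPow (p : ℕ) [Fact p.Prime] (k : Type*) [Field k] [CharP k p] [PerfectRing k p]
    (i : ℤ) : WittVector p k ≃+* WittVector p k :=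
  ((WittVector.frobeniusEquiv p k : RingAut (WittVector p k)) ^ i :
    RingAut (WittVector p k))

private lemma iter_comm {N L : Type*} [AddCommGroup N] [AddCommGroup L]
    (FN : N →+ N) (FL : L →+ L) (β : N →+ L)
    (h : ∀ n, β (FN n) = FL (β n)) :
    ∀ (e : ℕ) (n : N), β ((⇑FN)^[e] n) = (⇑FL)^[e] (β n) := by
  intro e
  induction e with
  | zero => intro n; rfl
  | succ e ih =>
    intro n
    rw [Function.iterate_succ_apply', Function.iterate_succ_apply', h, ih]

private lemma aux_inj (p : ℕ) [Fact p.Prime] (k : Type*) [Field k] [CharP k p] [PerfectRing k p]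
    (L : Type*) [AddCommGroup L] [Module (WittVector p k) L]
    (hL : IsFiniteLength (WittVector p k) L)
    (FL : L →+ L)
    (hFL : ∀ (r : WittVector p k) (x : L), FL (r • x) = WittVector.frobenius r • FL x)
    (eL : ℕ) (heL : ∀ e : ℕ, eL ≤ e → Set.range (⇑FL)^[e] = Set.range (⇑FL)^[eL]) :
    ∀ (e : ℕ) (x : L), x ∈ Set.range (⇑FL)^[eL] → (⇑FL)^[e] x = 0 → x = 0 := by
  have hiter : ∀ (n : ℕ) (r : WittVector p k) (x : L),
      (⇑FL)^[n] (r • x) = (⇑(WittVector.frobenius))^[n] r • (⇑FL)^[n] x := by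
    intro n
    induction n with
    | zero => intro r x; rfl
    | succ n ih =>
      intro r x
      rw [Function.iterate_succ_apply, Function.iterate_succ_apply,
        Function.iterate_succ_apply, hFL, ih]
  haveI hNoe : IsNoetherian (WittVector p k) L :=
    (isFiniteLength_iff_isNoetherian_isArtinian.mp hL).1
  let K : ℕ →o Submodule (WittVector p k) L :=
    { toFun := fun n =>
        { carrier := {x | (⇑FL)^[n] x = 0}
          add_mem' := by
            intro a b ha hb
            simp only [Set.mem_setOf_eq] at *
            rw [iterate_map_add, ha, hb, add_zero]
          zero_mem' := by
            simp only [Set.mem_setOf_eq]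
            exact iterate_map_zero FL n
          smul_mem' := by
            intro r x hx
            simp only [Set.mem_setOf_eq] at *
            rw [hiter, hx, smul_zero] }
      monotone' := by
        refine monotone_nat_of_le_succ ?_
        intro n x hx
        simp only [Submodule.mem_mk, AddSubmonoid.mem_mk, AddSubsemigroup.mem_mk,
          Set.mem_setOf_eq] at *
        rw [Function.iterate_succ_apply', hx, map_zero] }
  obtain ⟨n0, hn0⟩ := monotone_stabilizes_iff_noetherian.mpr hNoe K
  intro e x hx h0
  set e' := max eL n0 with he'
  rw [← heL e' (le_max_left _ _)] at hx
  obtain ⟨y, rfl⟩ := hx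
  have hy : y ∈ K (e + e') := by
    show (⇑FL)^[e + e'] y = 0
    rw [Function.iterate_add_apply]
    exact h0
  have : y ∈ K e' := by
    have h1 := hn0 (e + e') (le_trans (le_max_right _ _) (Nat.le_add_left _ _))
    have h2 := hn0 e' (le_max_right _ _)
    rw [← h2, h1]
    exact hy
  exact this

/-- Given a short exact sequence `0 → M →α N →β L → 0` of `W(k)_σ`-modules
of finite `W(k)`-length, with `α`, `β` generalized `W(k)_σ`-homomorphisms, the induced
sequence of semistable parts `0 → M^{ss} → N^{ss} → L^{ss} → 0` is exact: `α` is injective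
on `M^{ss}`, `α(M^{ss})` is exactly the kernel of `β` inside `N^{ss}`, and `β` maps
`N^{ss}` onto `L^{ss}`. Semistable parts are stable images of Frobenius iterates. -/
theorem semistable_part_exact
    (p : ℕ) [Fact p.Prime] (k : Type*) [Field k] [CharP k p] [PerfectRing k p]
    (M N L : Type*) [AddCommGroup M] [AddCommGroup N] [AddCommGroup L]
    [Module (WittVector p k) M] [Module (WittVector p k) N] [Module (WittVector p k) L]
    (hM : IsFiniteLength (WittVector p k) M) (hN : IsFiniteLength (WittVector p k) N)
    (hL : IsFiniteLength (WittVector p k) L)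
    (FM : M →+ M) (FN : N →+ N) (FL : L →+ L)
    (hFM : ∀ (r : WittVector p k) (m : M), FM (r • m) = WittVector.frobenius r • FM m)
    (hFN : ∀ (r : WittVector p k) (n : N), FN (r • n) = WittVector.frobenius r • FN n)
    (hFL : ∀ (r : WittVector p k) (x : L), FL (r • x) = WittVector.frobenius r • FL x)
    (α : M →+ N) (β : N →+ L) (iα iβ : ℤ)
    (hcommα : ∀ m : M, α (FM m) = FN (α m))
    (hcommβ : ∀ n : N, β (FN n) = FL (β n))
    (hsemiα : ∀ (r : WittVector p k) (m : M), α (r • m) = sigmaZPow p k iα r • α m)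
    (hsemiβ : ∀ (r : WittVector p k) (n : N), β (r • n) = sigmaZPow p k iβ r • β n)
    (hinj : Function.Injective α)
    (hexact : Set.range α = {n : N | β n = 0})
    (hsurj : Function.Surjective β)
    (eM eN eL : ℕ)
    (heM : ∀ e : ℕ, eM ≤ e → Set.range (⇑FM)^[e] = Set.range (⇑FM)^[eM])
    (heN : ∀ e : ℕ, eN ≤ e → Set.range (⇑FN)^[e] = Set.range (⇑FN)^[eN])
    (heL : ∀ e : ℕ, eL ≤ e → Set.range (⇑FL)^[e] = Set.range (⇑FL)^[eL]) :
    Set.InjOn α (Set.range (⇑FM)^[eM]) ∧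
    α '' Set.range (⇑FM)^[eM] = Set.range (⇑FN)^[eN] ∩ {n : N | β n = 0} ∧
    β '' Set.range (⇑FN)^[eN] = Set.range (⇑FL)^[eL] := by
  have hβcomm := iter_comm FN FL β hcommβ
  have hαcomm := iter_comm FM FN α hcommα
  have part3 : β '' Set.range (⇑FN)^[eN] = Set.range (⇑FL)^[eL] := by
    rw [← heN (max eN eL) (le_max_left _ _), ← heL (max eN eL) (le_max_right _ _)]
    ext x
    constructor
    · rintro ⟨-, ⟨n, rfl⟩, rfl⟩
      exact ⟨β n, (hβcomm _ n).symm⟩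
    · rintro ⟨y, rfl⟩
      obtain ⟨n, rfl⟩ := hsurj y
      exact ⟨(⇑FN)^[max eN eL] n, ⟨n, rfl⟩, hβcomm _ n⟩
  refine ⟨hinj.injOn, ?_, part3⟩
  apply Set.Subset.antisymm
  · rintro _ ⟨m, hm, rfl⟩
    rw [← heM (max eM eN) (le_max_left _ _)] at hm
    obtain ⟨m', rfl⟩ := hm
    constructor
    · rw [← heN (max eM eN) (le_max_right _ _)]
      exact ⟨α m', (hαcomm _ m').symm⟩
    · show β (α ((⇑FM)^[max eM eN] m')) = 0
      have : α ((⇑FM)^[max eM eN] m') ∈ {n : N | β n = 0} :=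
        hexact ▸ Set.mem_range_self _
      exact this
  · rintro n ⟨hn1, hn2⟩
    rw [← heN (eM + eN) (Nat.le_add_left _ _)] at hn1
    obtain ⟨n'', rfl⟩ := hn1
    set n' : N := (⇑FN)^[eN] n'' with hn'
    have hrw : (⇑FN)^[eM + eN] n'' = (⇑FN)^[eM] n' := Function.iterate_add_apply _ _ _ _
    have hβn' : β n' ∈ Set.range (⇑FL)^[eL] := by
      rw [← part3]
      exact ⟨n', ⟨n'', rfl⟩, rfl⟩
    have hβ0 : β n' = 0 := by
      refine aux_inj p k L hL FL hFL eL heL eM (β n') hβn' ?_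
      rw [← hβcomm eM n', ← hrw]
      exact hn2
    have : n' ∈ Set.range α := by rw [hexact]; exact hβ0
    obtain ⟨m, hm⟩ := this
    refine ⟨(⇑FM)^[eM] m, Set.mem_range_self _, ?_⟩
    rw [hαcomm eM m, hm, ← hrw]
end
end

section
/- Let X be a projective variety of dimension n > 0 over an algebraically closed field k of characteristic p > 0. If dim_k H^{n-1}(X, O_X)^{ss} < dim_k H^n(X, O_X)^{ss}, where (−)^{ss} denotes the Frobenius-semistable part, then for every j ≥ 1 the W(k)-length of H^n(X, W_j O_X)^{ss} is at least j; in particular these lengths grow without bound as j → ∞. -/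
noncomputable section

/-- Length of a module, as the Krull dimension of its lattice of submodules. -/
def moduleLength (R M : Type*) [Ring R] [AddCommGroup M] [Module R M] : WithBot ℕ∞ :=
  Order.krullDim (Submodule R M)

section Aux

variable {A : Type*} [CommRing A] {M N : Type*} [AddCommGroup M] [AddCommGroup N]
  [Module A M] [Module A N]

lemma semi_map_zero (τ : A →+* A) (f : M → N)
    (hsmul : ∀ (r : A) (x : M), f (r • x) = τ r • f x) : f 0 = 0 := by
  have := hsmul 0 0
  simpa using this

/-- image of a submodule under a `τ`-semilinear map, `τ` an automorphism -/
def semiImage (τ : A ≃+* A) (f : M → N) (hadd : ∀ x y, f (x + y) = f x + f y)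
    (hsmul : ∀ (r : A) (x : M), f (r • x) = τ r • f x) (S : Submodule A M) :
    Submodule A N where
  carrier := f '' S
  add_mem' := by
    rintro _ _ ⟨a, ha, rfl⟩ ⟨b, hb, rfl⟩
    exact ⟨a + b, S.add_mem ha hb, hadd a b⟩
  zero_mem' := ⟨0, S.zero_mem, semi_map_zero (τ : A →+* A) f hsmul⟩
  smul_mem' := by
    rintro r _ ⟨a, ha, rfl⟩
    refine ⟨τ.symm r • a, S.smul_mem _ ha, ?_⟩
    rw [hsmul, RingEquiv.apply_symm_apply]

lemma semiImage_coe (τ : A ≃+* A) (f : M → N) (hadd) (hsmul) (S : Submodule A M) :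
    (semiImage τ f hadd hsmul S : Set N) = f '' S := rfl

/-- preimage of a submodule under a `τ`-semilinear map -/
def semiComap (τ : A →+* A) (f : M → N) (hadd : ∀ x y, f (x + y) = f x + f y)
    (hsmul : ∀ (r : A) (x : M), f (r • x) = τ r • f x) (T : Submodule A N) :
    Submodule A M where
  carrier := f ⁻¹' T
  add_mem' := by
    intro a b ha hb
    simp only [Set.mem_preimage, SetLike.mem_coe] at *
    rw [hadd]; exact T.add_mem ha hb
  zero_mem' := by
    simp only [Set.mem_preimage, SetLike.mem_coe, semi_map_zero τ f hsmul]
    exact T.zero_mem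
  smul_mem' := by
    intro r a ha
    simp only [Set.mem_preimage, SetLike.mem_coe] at *
    rw [hsmul]; exact T.smul_mem _ ha

lemma semiComap_mem (τ : A →+* A) (f : M → N) (hadd) (hsmul) (T : Submodule A N) (x : M) :
    x ∈ semiComap τ f hadd hsmul T ↔ f x ∈ T := Iff.rfl

/-- length of a submodule as krull dimension of the interval below it -/
def Ldim (S : Submodule A M) : WithBot ℕ∞ :=
  Order.krullDim {p : Submodule A M // p ≤ S}

lemma moduleLength_eq_Ldim (S : Submodule A M) :
    Order.krullDim (Submodule A S) = Ldim S :=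
  Order.krullDim_eq_of_orderIso (Submodule.MapSubtype.orderIso S)

lemma Ldim_mono {S S' : Submodule A M} (h : S ≤ S') : Ldim S ≤ Ldim S' := by
  refine Order.krullDim_le_of_strictMono (fun p => ⟨p.1, p.2.trans h⟩) ?_
  intro a b hab
  exact Subtype.coe_lt_coe.mp (Subtype.coe_lt_coe.mpr hab)

lemma Ldim_semiImage_le (τ : A ≃+* A) (f : M → N) (hadd) (hsmul) (S : Submodule A M) :
    Ldim (semiImage τ f hadd hsmul S) ≤ Ldim S := by
  refine Order.krullDim_le_of_strictMono
    (fun q => ⟨semiComap (τ : A →+* A) f hadd hsmul q.1 ⊓ S, inf_le_right⟩) ?_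
  intro a b hab
  have hlt : a.1 < b.1 := Subtype.coe_lt_coe.mpr hab
  obtain ⟨hle, y, hyb, hya⟩ := (SetLike.lt_iff_le_and_exists).mp hlt
  obtain ⟨w, hwS, hfw⟩ : y ∈ (semiImage τ f hadd hsmul S : Set N) := b.2 hyb
  refine Subtype.coe_lt_coe.mp (SetLike.lt_iff_le_and_exists.mpr ⟨?_, w, ?_, ?_⟩)
  · exact inf_le_inf_right _ (fun x hx => hle hx)
  · exact ⟨show f w ∈ b.1 from hfw ▸ hyb, hwS⟩
  · intro hw
    exact hya (show y ∈ a.1 from hfw ▸ hw.1)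

lemma iter_add (f : M → M) (hadd : ∀ x y, f (x + y) = f x + f y) :
    ∀ (e : ℕ) (x y : M), f^[e] (x + y) = f^[e] x + f^[e] y := by
  intro e
  induction e with
  | zero => intro x y; simp
  | succ e ih =>
    intro x y
    simp only [Function.iterate_succ_apply']
    rw [ih, hadd]

lemma iter_smul (σ : RingAut A) (f : M → M)
    (hsmul : ∀ (r : A) (x : M), f (r • x) = σ r • f x) :
    ∀ (e : ℕ) (r : A) (x : M), f^[e] (r • x) = (σ ^ e) r • f^[e] x := by
  intro e
  induction e with
  | zero => intro r x; simp only [Function.iterate_zero, id_eq, pow_zero]; rfl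
  | succ e ih =>
    intro r x
    simp only [Function.iterate_succ_apply']
    rw [ih, hsmul, pow_succ']
    rfl

end Aux
lemma comm_iterate {M N : Type*} (f : M → M) (g : N → N) (φ : M → N)
    (h : ∀ x, φ (f x) = g (φ x)) : ∀ (e : ℕ) (x : M), φ (f^[e] x) = g^[e] (φ x) := by
  intro e
  induction e with
  | zero => intro x; simp
  | succ e ih =>
    intro x
    rw [Function.iterate_succ_apply' f, h, ih, ← Function.iterate_succ_apply' g]

section Aux2

variable {A : Type*} [CommRing A] {M : Type*} [AddCommGroup M] [Module A M]

/-- the image of `f^[e]` as a submodule, for `σ`-semilinear `f` -/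
def iterRange (σ : RingAut A) (f : M → M) (hadd : ∀ x y, f (x + y) = f x + f y)
    (hsmul : ∀ (r : A) (x : M), f (r • x) = σ r • f x) (e : ℕ) : Submodule A M :=
  semiImage (σ ^ e) (f^[e]) (iter_add f hadd e) (iter_smul σ f hsmul e) ⊤

lemma iterRange_coe (σ : RingAut A) (f : M → M) (hadd) (hsmul) (e : ℕ) :
    (iterRange σ f hadd hsmul e : Set M) = Set.range f^[e] := by
  rw [iterRange, semiImage_coe, Submodule.top_coe, Set.image_univ]

lemma exists_stabE [IsArtinian A M] (σ : RingAut A) (f : M → M)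
    (hadd : ∀ x y, f (x + y) = f x + f y)
    (hsmul : ∀ (r : A) (x : M), f (r • x) = σ r • f x) :
    ∃ e : ℕ, ∀ e', e ≤ e' → Set.range f^[e'] = Set.range f^[e] := by
  have hmono : ∀ e e', e ≤ e' → Set.range f^[e'] ⊆ Set.range f^[e] := by
    intro e e' h x hx
    obtain ⟨y, rfl⟩ := hx
    obtain ⟨d, rfl⟩ := Nat.exists_eq_add_of_le h
    exact ⟨f^[d] y, (Function.iterate_add_apply f e d y).symm⟩
  let chain : ℕ →o (Submodule A M)ᵒᵈ :=
    ⟨fun e => OrderDual.toDual (iterRange σ f hadd hsmul e), by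
      intro a b h
      show iterRange σ f hadd hsmul b ≤ iterRange σ f hadd hsmul a
      intro x hx
      rw [← SetLike.mem_coe, iterRange_coe] at hx ⊢
      exact hmono a b h hx⟩
  obtain ⟨n, hn⟩ := IsArtinian.monotone_stabilizes chain
  refine ⟨n, fun e' he' => ?_⟩
  have h2 : iterRange σ f hadd hsmul n = iterRange σ f hadd hsmul e' :=
    OrderDual.toDual_inj.mp (hn e' he')
  rw [← iterRange_coe σ f hadd hsmul e', ← iterRange_coe σ f hadd hsmul n, h2]

lemma le_krullDim_Iic {S : Submodule A M} (c : LTSeries (Submodule A M))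
    (hlast : c.last ≤ S) : (c.length : WithBot ℕ∞) ≤ Ldim S := by
  let c' : LTSeries {p : Submodule A M // p ≤ S} :=
    ⟨c.length, fun i => ⟨c i, (c.monotone (Fin.le_last i)).trans hlast⟩,
      fun i => by change (_ : {p : Submodule A M // p ≤ S}) < _; exact Subtype.coe_lt_coe.mp (c.step i)⟩
  exact Order.LTSeries.length_le_krullDim c'

end Aux2

/-- Let `X` be a projective variety of dimension `n > 0` over an
algebraically closed field `k` of characteristic `p > 0`, with
`dim_k H^{n-1}(X,O_X)^{ss} < dim_k H^n(X,O_X)^{ss}`. Then for every `j ≥ 1` the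
`W(k)`-length of `H^n(X, W_j O_X)^{ss}` is at least `j`; in particular these lengths grow
without bound. The cohomology is modeled by its defining data: finite-length
`W(k)`-modules `P = H^{n-1}(X,O_X)`, `H j = H^n(X,W_j O_X)` with σ-semilinear Frobenius
actions, the exact sequences `P →B H 1 →V H (j+1) →R H j → 0` of generalized
`W(k)_σ`-homomorphisms, and semistable parts realized as stable images of Frobenius
iterates. -/
theorem length_semistable_part_grows
    (p : ℕ) [Fact p.Prime] (k : Type*) [Field k] [IsAlgClosed k] [CharP k p]
    -- `P = H^{n-1}(X, O_X)` and `H j = H^n(X, W_j O_X)` with their Frobenius actions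
    (P : Type*) [AddCommGroup P] [Module (WittVector p k) P]
    (H : ℕ → Type*) [∀ j, AddCommGroup (H j)] [∀ j, Module (WittVector p k) (H j)]
    (hPfin : IsFiniteLength (WittVector p k) P)
    (hHfin : ∀ j, IsFiniteLength (WittVector p k) (H j))
    (FP : P →+ P) (F : ∀ j, H j →+ H j)
    (hFP : ∀ (r : WittVector p k) (x : P), FP (r • x) = WittVector.frobenius r • FP x)
    (hF : ∀ (j : ℕ) (r : WittVector p k) (x : H j),
      F j (r • x) = WittVector.frobenius r • F j x)
    -- the exact sequences `P →B H 1 →V H (j+1) →R H j → 0` of generalized homomorphisms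
    (B : ∀ j : ℕ, P →+ H 1) (V : ∀ j : ℕ, H 1 →+ H (j + 1)) (R : ∀ j : ℕ, H (j + 1) →+ H j)
    (iB : ℕ → ℤ)
    (hBsemi : ∀ (j : ℕ) (r : WittVector p k) (x : P),
      B j (r • x) = sigmaZPow p k (iB j) r • B j x)
    (hVsemi : ∀ (j : ℕ) (r : WittVector p k) (x : H 1),
      V j (r • x) = sigmaZPow p k (-(j : ℤ)) r • V j x)
    (hRsemi : ∀ (j : ℕ) (r : WittVector p k) (x : H (j + 1)), R j (r • x) = r • R j x)
    (hBcomm : ∀ (j : ℕ) (x : P), B j (FP x) = F 1 (B j x))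
    (hVcomm : ∀ (j : ℕ) (x : H 1), V j (F 1 x) = F (j + 1) (V j x))
    (hRcomm : ∀ (j : ℕ) (x : H (j + 1)), R j (F (j + 1) x) = F j (R j x))
    (hRsurj : ∀ j : ℕ, 1 ≤ j → Function.Surjective (R j))
    (hexactV : ∀ j : ℕ, 1 ≤ j → ∀ x : H (j + 1), R j x = 0 ↔ x ∈ Set.range (V j))
    (hexactB : ∀ j : ℕ, 1 ≤ j → ∀ x : H 1, V j x = 0 ↔ x ∈ Set.range (B j))
    -- the semistable parts of `P` and `H 1`, and the assumption
    -- `dim_k H^{n-1}(X,O_X)^{ss} < dim_k H^n(X,O_X)^{ss}`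
    (eP e1 : ℕ)
    (heP : ∀ e : ℕ, eP ≤ e → Set.range (⇑FP)^[e] = Set.range (⇑FP)^[eP])
    (he1 : ∀ e : ℕ, e1 ≤ e → Set.range (⇑(F 1))^[e] = Set.range (⇑(F 1))^[e1])
    (SP : Submodule (WittVector p k) P) (hSP : (SP : Set P) = Set.range (⇑FP)^[eP])
    (S1 : Submodule (WittVector p k) (H 1))
    (hS1 : (S1 : Set (H 1)) = Set.range (⇑(F 1))^[e1])
    (hlt : moduleLength (WittVector p k) SP < moduleLength (WittVector p k) S1) :
    ∀ j : ℕ, 1 ≤ j → ∀ e : ℕ,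
      (∀ e' : ℕ, e ≤ e' → Set.range (⇑(F j))^[e'] = Set.range (⇑(F j))^[e]) →
      ∀ S : Submodule (WittVector p k) (H j),
        (S : Set (H j)) = Set.range (⇑(F j))^[e] →
        ((j : ℕ∞) : WithBot ℕ∞) ≤ moduleLength (WittVector p k) S := by
  classical
  set σ : RingAut (WittVector p k) := WittVector.frobeniusEquiv p k with hσdef
  have hσapp : ∀ r : WittVector p k, σ r = WittVector.frobenius r := fun r => by
    rw [hσdef, WittVector.frobeniusEquiv_apply]
  have hFs : ∀ (j : ℕ) (r : WittVector p k) (x : H j), F j (r • x) = σ r • F j x := by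
    intro j r x; rw [hσapp]; exact hF j r x
  have hFadd : ∀ (j : ℕ) (x y : H j), F j (x + y) = F j x + F j y :=
    fun j x y => map_add (F j) x y
  have hart : ∀ j, IsArtinian (WittVector p k) (H j) :=
    fun j => (isFiniteLength_iff_isNoetherian_isArtinian.mp (hHfin j)).2
  have hstab : ∀ j, ∃ e, ∀ e', e ≤ e' →
      Set.range (⇑(F j))^[e'] = Set.range (⇑(F j))^[e] := by
    intro j
    haveI := hart j
    exact exists_stabE σ (F j) (hFadd j) (hFs j)
  choose E hE using hstab
  obtain ⟨Ssub, hSsub⟩ : ∃ Ssub : ∀ j : ℕ, Submodule (WittVector p k) (H j),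
      ∀ j, (Ssub j : Set (H j)) = Set.range (⇑(F j))^[E j] :=
    ⟨fun j => iterRange σ (F j) (hFadd j) (hFs j) (E j),
      fun j => iterRange_coe σ (F j) (hFadd j) (hFs j) (E j)⟩
  -- uniqueness of the stable range
  have huniq : ∀ j e, (∀ e', e ≤ e' → Set.range (⇑(F j))^[e'] = Set.range (⇑(F j))^[e]) →
      Set.range (⇑(F j))^[e] = Set.range (⇑(F j))^[E j] := by
    intro j e he
    rw [← he (max e (E j)) (le_max_left _ _), hE j (max e (E j)) (le_max_right _ _)]
  have hS1eq : S1 = Ssub 1 := by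
    refine SetLike.coe_injective ?_
    rw [hS1, hSsub]
    exact huniq 1 e1 he1
  have hlt' : Ldim SP < Ldim (Ssub 1) := by
    rw [← moduleLength_eq_Ldim, ← moduleLength_eq_Ldim, ← hS1eq]
    exact hlt
  -- the key existence of a semistable class with nonzero image under V
  have hkey : ∀ j, 1 ≤ j → ∃ y ∈ (Ssub 1 : Set (H 1)), V j y ≠ 0 := by
    intro j hj
    by_contra hcon
    push_neg at hcon
    have hsub : (Ssub 1 : Set (H 1)) ⊆ Set.range (B j) :=
      fun y hy => (hexactB j hj y).mp (hcon y hy)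
    have him : ∀ m : ℕ, (Ssub 1 : Set (H 1)) ⊆ (⇑(F 1))^[m] '' (Ssub 1 : Set (H 1)) := by
      intro m x hx
      rw [hSsub, ← hE 1 (m + E 1) (Nat.le_add_left _ _)] at hx
      obtain ⟨y, rfl⟩ := hx
      refine ⟨(⇑(F 1))^[E 1] y, ?_, (Function.iterate_add_apply (⇑(F 1)) m (E 1) y).symm⟩
      rw [hSsub]
      exact ⟨y, rfl⟩
    have hBiter : ∀ (m : ℕ) (w : P), B j ((⇑FP)^[m] w) = (⇑(F 1))^[m] (B j w) :=
      fun m w => comm_iterate (⇑FP) (⇑(F 1)) (⇑(B j)) (hBcomm j) m w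
    have hfinal : (Ssub 1 : Set (H 1)) ⊆ ⇑(B j) '' (SP : Set P) := by
      intro x hx
      obtain ⟨z, hz, rfl⟩ := him eP hx
      obtain ⟨w, hw⟩ := hsub hz
      refine ⟨(⇑FP)^[eP] w, ?_, ?_⟩
      · rw [hSP]; exact ⟨w, rfl⟩
      · rw [hBiter, hw]
    have h1 : Ldim (Ssub 1) ≤
        Ldim (semiImage (sigmaZPow p k (iB j)) (⇑(B j))
          (fun a b => map_add (B j) a b) (hBsemi j) SP) :=
      Ldim_mono (fun x hx => hfinal hx)
    have h2 : Ldim (semiImage (sigmaZPow p k (iB j)) (⇑(B j))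
        (fun a b => map_add (B j) a b) (hBsemi j) SP) ≤ Ldim SP :=
      Ldim_semiImage_le _ _ _ _ _
    exact absurd hlt' (not_lt.mpr (h1.trans h2))
  -- R maps the stable part onto the stable part
  have hRim : ∀ j, 1 ≤ j → ⇑(R j) '' (Ssub (j + 1) : Set (H (j + 1))) = (Ssub j : Set (H j)) := by
    intro j hj
    have h1 : (Ssub (j + 1) : Set (H (j + 1))) =
        Set.range (⇑(F (j + 1)))^[max (E j) (E (j + 1))] := by
      rw [hSsub, ← hE (j + 1) _ (le_max_right _ _)]
    have h2 : (Ssub j : Set (H j)) = Set.range (⇑(F j))^[max (E j) (E (j + 1))] := by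
      rw [hSsub, ← hE j _ (le_max_left _ _)]
    rw [h1, h2]
    ext t
    constructor
    · rintro ⟨s, ⟨u, rfl⟩, rfl⟩
      exact ⟨R j u, (comm_iterate (⇑(F (j + 1))) (⇑(F j)) (⇑(R j)) (hRcomm j) _ u).symm⟩
    · rintro ⟨u, rfl⟩
      obtain ⟨s, rfl⟩ := hRsurj j hj u
      exact ⟨(⇑(F (j + 1)))^[max (E j) (E (j + 1))] s, ⟨s, rfl⟩,
        comm_iterate (⇑(F (j + 1))) (⇑(F j)) (⇑(R j)) (hRcomm j) _ s⟩
  -- V maps the stable part of H 1 into the stable part of H (j+1)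
  have hVS : ∀ j, 1 ≤ j → ∀ y ∈ (Ssub 1 : Set (H 1)),
      V j y ∈ (Ssub (j + 1) : Set (H (j + 1))) := by
    intro j hj y hy
    rw [hSsub, ← hE 1 (max (E 1) (E (j + 1))) (le_max_left _ _)] at hy
    obtain ⟨z, rfl⟩ := hy
    rw [hSsub, ← hE (j + 1) (max (E 1) (E (j + 1))) (le_max_right _ _)]
    exact ⟨V j z, (comm_iterate (⇑(F 1)) (⇑(F (j + 1))) (⇑(V j)) (hVcomm j) _ z).symm⟩
  -- main claim: a chain of length j below the stable part
  have claim : ∀ j, 1 ≤ j → ∃ c : LTSeries (Submodule (WittVector p k) (H j)),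
      c.length = j ∧ c.last ≤ Ssub j := by
    intro j hj
    induction j, hj using Nat.le_induction with
    | base =>
      obtain ⟨y, hyS, hVy⟩ := hkey 1 le_rfl
      have hy0 : y ≠ 0 := fun h => hVy (by rw [h, map_zero])
      have hbot : (⊥ : Submodule (WittVector p k) (H 1)) < Ssub 1 :=
        bot_lt_iff_ne_bot.mpr ((Ssub 1).ne_bot_iff.mpr ⟨y, hyS, hy0⟩)
      refine ⟨(RelSeries.singleton _ (Ssub 1)).cons ⊥
        (by rw [RelSeries.head_singleton]; exact hbot), ?_, ?_⟩
      · simp [RelSeries.cons, RelSeries.append, RelSeries.singleton]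
      · rw [RelSeries.last_cons, RelSeries.last_singleton]
    | succ j hj ih =>
      obtain ⟨c, hclen, hclast⟩ := ih
      obtain ⟨y, hyS, hVy⟩ := hkey j hj
      have hxS : V j y ∈ (Ssub (j + 1) : Set (H (j + 1))) := hVS j hj y hyS
      have hxR : R j (V j y) = 0 := (hexactV j hj (V j y)).mpr ⟨y, rfl⟩
      let Rlin : H (j + 1) →ₗ[WittVector p k] H j :=
        { toFun := R j, map_add' := map_add _, map_smul' := hRsemi j }
      let g : {q : Submodule (WittVector p k) (H j) // q ≤ Ssub j} →
          Submodule (WittVector p k) (H (j + 1)) :=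
        fun q => Submodule.comap Rlin q.1 ⊓ Ssub (j + 1)
      have hg : StrictMono g := by
        intro a b hab
        have hlt2 : a.1 < b.1 := Subtype.coe_lt_coe.mpr hab
        obtain ⟨hle, t, htb, hta⟩ := SetLike.lt_iff_le_and_exists.mp hlt2
        refine SetLike.lt_iff_le_and_exists.mpr
          ⟨inf_le_inf_right _ (Submodule.comap_mono hle), ?_⟩
        have htS : t ∈ ⇑(R j) '' (Ssub (j + 1) : Set (H (j + 1))) := by
          rw [hRim j hj]
          exact b.2 htb
        obtain ⟨s, hsS, rfl⟩ := htS
        exact ⟨s, ⟨show Rlin s ∈ b.1 from htb, hsS⟩, fun hs => hta hs.1⟩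
      let cc : LTSeries {q : Submodule (WittVector p k) (H j) // q ≤ Ssub j} :=
        ⟨c.length, fun i => ⟨c i, (c.monotone (Fin.le_last i)).trans hclast⟩,
          fun i => by change (_ : {q : Submodule (WittVector p k) (H j) // q ≤ Ssub j}) < _; exact Subtype.coe_lt_coe.mp (c.step i)⟩
      have hhead : (⊥ : Submodule (WittVector p k) (H (j + 1))) < (cc.map g hg).head := by
        rw [LTSeries.head_map]
        refine bot_lt_iff_ne_bot.mpr ((g cc.head).ne_bot_iff.mpr ⟨V j y, ?_, hVy⟩)
        refine Submodule.mem_inf.mpr ⟨Submodule.mem_comap.mpr ?_, hxS⟩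
        rw [show Rlin (V j y) = 0 from hxR]
        exact Submodule.zero_mem _
      refine ⟨(cc.map g hg).cons ⊥ hhead, ?_, ?_⟩
      · show 0 + (cc.map g hg).length + 1 = j + 1
        show 0 + c.length + 1 = j + 1
        omega
      · rw [RelSeries.last_cons, LTSeries.last_map]
        exact inf_le_right
  -- conclusion
  intro j hj e he S hS
  obtain ⟨c, hclen, hclast⟩ := claim j hj
  have hSeq : S = Ssub j := by
    refine SetLike.coe_injective ?_
    rw [hS, hSsub]
    exact huniq j e he
  have hfin := le_krullDim_Iic c (hSeq ▸ hclast)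
  rw [show moduleLength (WittVector p k) S = Ldim S from moduleLength_eq_Ldim S]
  rw [hclen] at hfin
  exact_mod_cast hfin
end
end
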